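/- For the kernel k(t,s)=(a/Γ(b/a))(t^a−s^a)^{b/a−1} t^{−aμ} s^{a(μ+1)−1} (0<s<t), with parameters a,b>0 and μ>−1: k is homogeneous of degree b−1; for every n≥1, ∫_0^1 k(1,s) s^{b(n−1)} ds = Γ((n−1)b/a+μ+1)/Γ(nb/a+μ+1); consequently the coefficients ĉ_n defined by ĉ_0=1 and ĉ_n=ĉ_{n−1}∫_0^1 k(1,s)s^{b(n−1)}ds satisfy ĉ_n = Γ(μ+1)/Γ(nb/a+μ+1) for all n≥0, and Φ(t,z)=Γ(μ+1)·E_{b/a, μ+1}(z t^b) for all t≥0, z∈ℂ. -/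
import Mathlib


open MeasureTheory Filter

noncomputable section

noncomputable def coeff (k : ℝ → ℝ → ℝ) : ℕ → ℝ → ℝ
  | 0, _ => 1
  | n + 1, t => if 0 < t then ∫ s in Set.Ioc (0:ℝ) t, k t s * coeff k n s else 0

noncomputable def Phi (k : ℝ → ℝ → ℝ) (t : ℝ) (l : ℂ) : ℂ :=
  ∑' n : ℕ, (coeff k n t : ℂ) * l ^ n

noncomputable def PhiR (k : ℝ → ℝ → ℝ) (t : ℝ) (x : ℝ) : ℝ :=
  ∑' n : ℕ, coeff k n t * x ^ n

noncomputable def chat (k : ℝ → ℝ → ℝ) (β : ℝ) : ℕ → ℝ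
  | 0 => 1
  | n + 1 => chat k β n * ∫ s in Set.Ioc (0:ℝ) 1, k 1 s * s ^ (β * (n : ℝ))

noncomputable def PhiHatC (k : ℝ → ℝ → ℝ) (β : ℝ) (z : ℂ) : ℂ :=
  ∑' n : ℕ, (chat k β n : ℂ) * z ^ n

noncomputable def PhiHatR (k : ℝ → ℝ → ℝ) (β : ℝ) (x : ℝ) : ℝ :=
  ∑' n : ℕ, chat k β n * x ^ n

noncomputable def mlC (ρ σ : ℝ) (z : ℂ) : ℂ :=
  ∑' n : ℕ, z ^ n / Complex.Gamma (((ρ * (n : ℝ) + σ : ℝ) : ℂ))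

-- real Beta integral
lemma betaReal {p q : ℝ} (hp : 0 < p) (hq : 0 < q) :
    ∫ s in Set.Ioc (0:ℝ) 1, s ^ (p-1) * (1-s) ^ (q-1) =
      Real.Gamma p * Real.Gamma q / Real.Gamma (p+q) := by
  have hcb : Complex.betaIntegral p q =
      ((∫ s in Set.Ioc (0:ℝ) 1, s ^ (p-1) * (1-s) ^ (q-1) : ℝ) : ℂ) := by
    rw [Complex.betaIntegral, intervalIntegral.integral_of_le (by norm_num : (0:ℝ) ≤ 1)]
    have : ((∫ s in Set.Ioc (0:ℝ) 1, s ^ (p-1) * (1-s) ^ (q-1) : ℝ) : ℂ)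
        = ∫ s in Set.Ioc (0:ℝ) 1, ((s ^ (p-1) * (1-s) ^ (q-1) : ℝ) : ℂ) :=
      (integral_ofReal (𝕜 := ℂ)).symm
    rw [this]
    refine setIntegral_congr_fun measurableSet_Ioc (fun x hx => ?_)
    have hx0 : (0:ℝ) ≤ x := hx.1.le
    have hx1 : (0:ℝ) ≤ 1 - x := by linarith [hx.2]
    rw [Complex.ofReal_mul, Complex.ofReal_cpow hx0, Complex.ofReal_cpow hx1]
    push_cast
    ring
  have h := Complex.Gamma_mul_Gamma_eq_betaIntegral
    (s := (p:ℂ)) (t := (q:ℂ)) (by simpa using hp) (by simpa using hq)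
  rw [hcb, ← Complex.ofReal_add, Complex.Gamma_ofReal, Complex.Gamma_ofReal,
    Complex.Gamma_ofReal, ← Complex.ofReal_mul, ← Complex.ofReal_mul] at h
  have h' : Real.Gamma p * Real.Gamma q =
      Real.Gamma (p+q) * ∫ s in Set.Ioc (0:ℝ) 1, s ^ (p-1) * (1-s) ^ (q-1) :=
    Complex.ofReal_injective h
  have hG : Real.Gamma (p+q) ≠ 0 := (Real.Gamma_pos_of_pos (by positivity)).ne'
  field_simp [hG] at h' ⊢
  linarith [h']

-- substitution u = s ^ a on (0,1]
lemma sub_rpow {a : ℝ} (ha : 0 < a) (f : ℝ → ℝ) :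
    ∫ s in Set.Ioc (0:ℝ) 1, a * s ^ (a-1) * f (s ^ a) = ∫ u in Set.Ioc (0:ℝ) 1, f u := by
  have key := integral_comp_rpow_Ioi_of_pos (g := (Set.Ioc (0:ℝ) 1).indicator f) ha
  have hmem : ∀ x : ℝ, 0 < x → (x ^ a ∈ Set.Ioc (0:ℝ) 1 ↔ x ∈ Set.Ioc (0:ℝ) 1) := by
    intro x hx
    simp only [Set.mem_Ioc, Real.rpow_pos_of_pos hx, hx, true_and]
    constructor
    · intro h
      by_contra hgt
      push_neg at hgt
      exact absurd h (not_le.mpr ((Real.one_lt_rpow_iff_of_pos hx).mpr (Or.inl ⟨hgt, ha⟩)))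
    · intro h
      exact Real.rpow_le_one hx.le h ha.le
  have hL : (∫ x in Set.Ioi (0:ℝ), (a * x ^ (a-1)) • (Set.Ioc (0:ℝ) 1).indicator f (x ^ a))
      = ∫ s in Set.Ioc (0:ℝ) 1, a * s ^ (a-1) * f (s ^ a) := by
    have step : (∫ x in Set.Ioi (0:ℝ), (a * x ^ (a-1)) • (Set.Ioc (0:ℝ) 1).indicator f (x ^ a))
        = ∫ x in Set.Ioi (0:ℝ),
            (Set.Ioc (0:ℝ) 1).indicator (fun s => a * s ^ (a-1) * f (s ^ a)) x := by
      refine setIntegral_congr_fun measurableSet_Ioi (fun x hx => ?_)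
      have hx0 : (0:ℝ) < x := hx
      by_cases hx1 : x ∈ Set.Ioc (0:ℝ) 1
      · rw [Set.indicator_of_mem ((hmem x hx0).mpr hx1), Set.indicator_of_mem hx1]
        simp [smul_eq_mul]
      · rw [Set.indicator_of_notMem (fun h => hx1 ((hmem x hx0).mp h)),
          Set.indicator_of_notMem hx1]
        simp
    rw [step, setIntegral_indicator measurableSet_Ioc,
      Set.inter_eq_right.mpr Set.Ioc_subset_Ioi_self]
  have hR : (∫ y in Set.Ioi (0:ℝ), (Set.Ioc (0:ℝ) 1).indicator f y)
      = ∫ u in Set.Ioc (0:ℝ) 1, f u := by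
    rw [setIntegral_indicator measurableSet_Ioc,
      Set.inter_eq_right.mpr Set.Ioc_subset_Ioi_self]
  rw [← hL, key, hR]

-- scaling s = t*u
lemma sub_scale {t : ℝ} (ht : 0 < t) (F : ℝ → ℝ) :
    ∫ s in Set.Ioc (0:ℝ) t, F s = t * ∫ u in Set.Ioc (0:ℝ) 1, F (t * u) := by
  have key := MeasureTheory.Measure.integral_comp_mul_left ((Set.Ioc (0:ℝ) t).indicator F) t
  have hmem : ∀ x : ℝ, (t * x ∈ Set.Ioc (0:ℝ) t ↔ x ∈ Set.Ioc (0:ℝ) 1) := by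
    intro x
    simp only [Set.mem_Ioc]
    constructor
    · rintro ⟨h1, h2⟩
      exact ⟨by nlinarith, by nlinarith⟩
    · rintro ⟨h1, h2⟩
      exact ⟨by positivity, by nlinarith⟩
  have h1 : (fun x => ((Set.Ioc (0:ℝ) t).indicator F) (t * x))
      = (Set.Ioc (0:ℝ) 1).indicator (fun x => F (t * x)) := by
    ext x
    by_cases hx : x ∈ Set.Ioc (0:ℝ) 1
    · rw [Set.indicator_of_mem hx, Set.indicator_of_mem ((hmem x).mpr hx)]
    · rw [Set.indicator_of_notMem hx, Set.indicator_of_notMem (fun h => hx ((hmem x).mp h))]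
  rw [h1] at key
  rw [← integral_indicator measurableSet_Ioc, ← integral_indicator measurableSet_Ioc, key]
  rw [smul_eq_mul, abs_of_pos (inv_pos.mpr ht)]
  field_simp
section Main

variable {a b μ : ℝ}

-- Part 1 core
lemma homog (ha : 0 < a) (hb : 0 < b)
    (k : ℝ → ℝ → ℝ)
    (hk : ∀ t s : ℝ, 0 < s → s < t →
      k t s = (a / Real.Gamma (b / a)) * (t ^ a - s ^ a) ^ (b / a - 1) *
        t ^ (-(a * μ)) * s ^ (a * (μ + 1) - 1)) :
    ∀ t : ℝ, 0 < t → ∀ s ∈ Set.Ioo (0:ℝ) 1, k t (t * s) = t ^ (b - 1) * k 1 s := by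
  intro t ht s hs
  obtain ⟨hs0, hs1⟩ := hs
  have hts0 : 0 < t * s := by positivity
  have hts : t * s < t := by nlinarith
  rw [hk t (t*s) hts0 hts, hk 1 s hs0 hs1]
  rw [Real.one_rpow, Real.one_rpow]
  simp only [Real.mul_rpow ht.le hs0.le]
  have hsa : s ^ a ≤ 1 := Real.rpow_le_one hs0.le hs1.le ha.le
  rw [show t ^ a - t ^ a * s ^ a = t ^ a * (1 - s ^ a) by ring,
    Real.mul_rpow (Real.rpow_nonneg ht.le a) (by linarith),
    ← Real.rpow_mul ht.le]
  have hT : t ^ (a * (b/a - 1)) * t ^ (-(a*μ)) * t ^ (a*(μ+1)-1) = t ^ (b-1) := by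
    rw [← Real.rpow_add ht, ← Real.rpow_add ht]
    congr 1
    field_simp
    ring
  rw [← hT]
  ring

-- Part 2 core
lemma intval (ha : 0 < a) (hb : 0 < b) (hμ : -1 < μ)
    (k : ℝ → ℝ → ℝ)
    (hk : ∀ t s : ℝ, 0 < s → s < t →
      k t s = (a / Real.Gamma (b / a)) * (t ^ a - s ^ a) ^ (b / a - 1) *
        t ^ (-(a * μ)) * s ^ (a * (μ + 1) - 1)) :
    ∀ m : ℝ, 0 ≤ m →
      (∫ s in Set.Ioc (0:ℝ) 1, k 1 s * s ^ (b * m)) =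
        Real.Gamma (m * (b/a) + μ + 1) / Real.Gamma ((m+1) * (b/a) + μ + 1) := by
  intro m hm
  set q : ℝ := b / a with hqdef
  have hq : 0 < q := div_pos hb ha
  set p : ℝ := m * q + μ + 1 with hpdef
  have hp : 0 < p := by
    have : 0 ≤ m * q := mul_nonneg hm hq.le
    simp only [hpdef]; linarith
  have hGq : Real.Gamma q ≠ 0 := (Real.Gamma_pos_of_pos hq).ne'
  set f : ℝ → ℝ := fun u => (1 / Real.Gamma q) * (u ^ (p-1) * (1-u) ^ (q-1)) with hfdef
  have key : ∀ s ∈ Set.Ioo (0:ℝ) 1, k 1 s * s ^ (b * m) = a * s ^ (a-1) * f (s ^ a) := by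
    intro s hs
    obtain ⟨hs0, hs1⟩ := hs
    rw [hk 1 s hs0 hs1, Real.one_rpow, Real.one_rpow, hfdef]
    simp only
    rw [← Real.rpow_mul hs0.le]
    have hs' : s ^ (a*(μ+1)-1) * s ^ (b*m) = s ^ (a-1) * s ^ (a*(p-1)) := by
      rw [← Real.rpow_add hs0, ← Real.rpow_add hs0]
      congr 1
      simp only [hpdef, hqdef]
      field_simp
      ring
    linear_combination (a / Real.Gamma q * (1 - s ^ a) ^ (q-1)) * hs'
  rw [integral_Ioc_eq_integral_Ioo, setIntegral_congr_fun measurableSet_Ioo key,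
    ← integral_Ioc_eq_integral_Ioo, sub_rpow ha f, hfdef]
  simp only
  rw [integral_const_mul, betaReal hp hq,
    show p + q = (m+1)*q + μ + 1 by rw [hpdef]; ring]
  field_simp

lemma chatval (ha : 0 < a) (hb : 0 < b) (hμ : -1 < μ)
    (k : ℝ → ℝ → ℝ)
    (hk : ∀ t s : ℝ, 0 < s → s < t →
      k t s = (a / Real.Gamma (b / a)) * (t ^ a - s ^ a) ^ (b / a - 1) *
        t ^ (-(a * μ)) * s ^ (a * (μ + 1) - 1)) :
    ∀ n : ℕ, chat k b n = Real.Gamma (μ + 1) / Real.Gamma ((n : ℝ) * (b / a) + μ + 1) := by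
  intro n
  induction n with
  | zero =>
    have : Real.Gamma (μ + 1) ≠ 0 := (Real.Gamma_pos_of_pos (by linarith)).ne'
    simp [chat, this]
  | succ n ih =>
    have hq : 0 < b / a := div_pos hb ha
    have hμ1 : (0:ℝ) < μ + 1 := by linarith
    have hGn : Real.Gamma ((n:ℝ) * (b/a) + μ + 1) ≠ 0 := by
      refine (Real.Gamma_pos_of_pos ?_).ne'
      have : 0 ≤ (n:ℝ) * (b/a) := by positivity
      linarith
    have hGn1 : Real.Gamma (((n:ℕ)+1:ℝ) * (b/a) + μ + 1) ≠ 0 := by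
      refine (Real.Gamma_pos_of_pos ?_).ne'
      have : 0 ≤ ((n:ℝ)+1) * (b/a) := by positivity
      push_cast
      linarith
    rw [chat, ih, intval ha hb hμ k hk (n:ℝ) (Nat.cast_nonneg n)]
    push_cast
    rw [div_mul_div_cancel₀ hGn]

lemma coeffval (ha : 0 < a) (hb : 0 < b) (hμ : -1 < μ)
    (k : ℝ → ℝ → ℝ)
    (hk : ∀ t s : ℝ, 0 < s → s < t →
      k t s = (a / Real.Gamma (b / a)) * (t ^ a - s ^ a) ^ (b / a - 1) *
        t ^ (-(a * μ)) * s ^ (a * (μ + 1) - 1)) :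
    ∀ n : ℕ, ∀ t : ℝ, 0 < t → coeff k n t = chat k b n * t ^ (b * (n:ℝ)) := by
  intro n
  induction n with
  | zero => intro t ht; simp [coeff, chat]
  | succ n ih =>
    intro t ht
    have step0 : coeff k (n+1) t = ∫ s in Set.Ioc (0:ℝ) t, k t s * coeff k n s := by
      simp only [coeff, if_pos ht]
    rw [step0]
    have step1 : (∫ s in Set.Ioc (0:ℝ) t, k t s * coeff k n s)
        = ∫ s in Set.Ioc (0:ℝ) t, k t s * (chat k b n * s ^ (b * (n:ℝ))) := by
      refine setIntegral_congr_fun measurableSet_Ioc (fun s hs => ?_)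
      rw [ih s hs.1]
    rw [step1, sub_scale ht]
    have step2 : (∫ u in Set.Ioc (0:ℝ) 1, k t (t * u) * (chat k b n * (t * u) ^ (b * (n:ℝ))))
        = ∫ u in Set.Ioc (0:ℝ) 1,
            (t ^ (b-1) * chat k b n * t ^ (b * (n:ℝ))) * (k 1 u * u ^ (b * (n:ℝ))) := by
      rw [integral_Ioc_eq_integral_Ioo, integral_Ioc_eq_integral_Ioo]
      refine setIntegral_congr_fun measurableSet_Ioo (fun u hu => ?_)
      rw [homog ha hb k hk t ht u hu, Real.mul_rpow ht.le hu.1.le]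
      ring
    rw [step2, integral_const_mul]
    have hT : t * (t ^ (b-1) * chat k b n * t ^ (b * (n:ℝ)))
        = chat k b n * t ^ (b * ((n:ℕ)+1:ℝ)) := by
      rw [show t * (t ^ (b-1) * chat k b n * t ^ (b * (n:ℝ)))
          = chat k b n * (t ^ (1:ℝ) * t ^ (b-1) * t ^ (b * (n:ℝ))) by rw [Real.rpow_one]; ring,
        ← Real.rpow_add ht, ← Real.rpow_add ht]
      push_cast
      ring_nf
    rw [← mul_assoc, hT, chat]
    push_cast
    ring

end Main

theorem stmt17 (a b μ : ℝ) (ha : 0 < a) (hb : 0 < b) (hμ : -1 < μ)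
    (k : ℝ → ℝ → ℝ)
    (hk : ∀ t s : ℝ, 0 < s → s < t →
      k t s = (a / Real.Gamma (b / a)) * (t ^ a - s ^ a) ^ (b / a - 1) *
        t ^ (-(a * μ)) * s ^ (a * (μ + 1) - 1)) :
    (∀ t : ℝ, 0 < t → ∀ s ∈ Set.Ioo (0:ℝ) 1, k t (t * s) = t ^ (b - 1) * k 1 s) ∧
    (∀ n : ℕ, 1 ≤ n →
      (∫ s in Set.Ioc (0:ℝ) 1, k 1 s * s ^ (b * ((n : ℝ) - 1))) =
        Real.Gamma (((n : ℝ) - 1) * (b / a) + μ + 1) / Real.Gamma ((n : ℝ) * (b / a) + μ + 1)) ∧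
    (∀ n : ℕ, chat k b n = Real.Gamma (μ + 1) / Real.Gamma ((n : ℝ) * (b / a) + μ + 1)) ∧
    (∀ t : ℝ, 0 ≤ t → ∀ z : ℂ,
      Phi k t z = (Real.Gamma (μ + 1) : ℂ) * mlC (b / a) (μ + 1) (z * ((t ^ b : ℝ) : ℂ))) := by
  have hμ1 : (0:ℝ) < μ + 1 := by linarith
  have hGμ : Real.Gamma (μ + 1) ≠ 0 := (Real.Gamma_pos_of_pos hμ1).ne'
  refine ⟨homog ha hb k hk, ?_, chatval ha hb hμ k hk, ?_⟩
  · intro n hn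
    have hm : (0:ℝ) ≤ (n:ℝ) - 1 := by
      have : (1:ℝ) ≤ (n:ℝ) := by exact_mod_cast hn
      linarith
    rw [intval ha hb hμ k hk ((n:ℝ) - 1) hm,
      show ((n:ℝ) - 1 + 1) = (n:ℝ) by ring]
  · intro t ht z
    rcases ht.eq_or_lt with h0 | h0
    · -- t = 0
      subst h0  -- ht : 0 ≤ t with t := 0? h0 : 0 = t
      rw [Phi, mlC]
      have hL : (∑' n : ℕ, (coeff k n (0:ℝ) : ℂ) * z ^ n) = 1 := by
        rw [tsum_eq_single 0 ?_]
        · simp [coeff]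
        · intro n hn
          match n, hn with
          | n + 1, _ => simp [coeff]
      have hR : (∑' n : ℕ, (z * (((0:ℝ) ^ b : ℝ) : ℂ)) ^ n /
          Complex.Gamma ((((b/a) * (n : ℝ) + (μ+1) : ℝ) : ℂ))) =
          1 / Complex.Gamma (((μ + 1 : ℝ) : ℂ)) := by
        rw [Real.zero_rpow hb.ne']
        rw [tsum_eq_single 0 ?_]
        · norm_num
        · intro n hn
          simp [zero_pow hn]
      rw [hL, hR, Complex.Gamma_ofReal]
      rw [mul_one_div, div_self (by exact_mod_cast hGμ)]
    · -- t > 0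
      rw [Phi, mlC, ← tsum_mul_left]
      refine tsum_congr fun n => ?_
      rw [coeffval ha hb hμ k hk n t h0, chatval ha hb hμ k hk n, Complex.Gamma_ofReal]
      have hGn : Real.Gamma ((n:ℝ) * (b/a) + μ + 1) ≠ 0 := by
        refine (Real.Gamma_pos_of_pos ?_).ne'
        have : 0 ≤ (n:ℝ) * (b/a) := by positivity
        linarith
      have htb : t ^ (b * (n:ℝ)) = (t ^ b) ^ (n:ℕ) := by
        rw [Real.rpow_mul ht, Real.rpow_natCast]
      rw [htb]
      have harg : (b/a) * (n:ℝ) + (μ + 1) = (n:ℝ) * (b/a) + μ + 1 := by ring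
      rw [harg]
      push_cast
      rw [mul_pow]
      have hX : (Real.Gamma ((n:ℝ)*(b/a)+μ+1) : ℂ) ≠ 0 := by exact_mod_cast hGn
      push_cast
      field_simp
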